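/- MSCR correctness (Theorem 1 applied to the Minimum Storage point): Let k, d, t, g be positive integers with k ≤ d, let M be a positive real number, and set α = M/k and β = β′ = M/(k(d−k+t)). Then for every sequence u_0, …, u_{g−1} of integers with 1 ≤ u_i ≤ t for all i and ∑_{i<g} u_i = k, writing S_i = ∑_{j<i} u_j, one has ∑_{i<g} u_i · min(α, (d − S_i)·β + (t − u_i)·β′) ≥ M. -/

import Mathlib

/-- MSCR correctness: Theorem 1 applied to the Minimum Storage point. -/
theorem mscr_correctness (k d t g : ℕ) (hk : 0 < k) (hd : 0 < d) (ht : 0 < t)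
    (hg : 0 < g) (hkd : k ≤ d) (M : ℝ) (hM : 0 < M)
    (α β β' : ℝ)
    (hα : α = M / k)
    (hβ : β = M / (k * ((d : ℝ) - k + t)))
    (hβ' : β' = M / (k * ((d : ℝ) - k + t)))
    (u : ℕ → ℕ) (hu : ∀ i < g, 1 ≤ u i ∧ u i ≤ t)
    (hsum : ∑ i ∈ Finset.range g, u i = k) :
    ∑ i ∈ Finset.range g, (u i : ℝ) *
        min α (((d : ℝ) - ((∑ j ∈ Finset.range i, u j : ℕ) : ℝ)) * β
          + ((t : ℝ) - (u i : ℝ)) * β') ≥ M := by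
  have hkR : (0:ℝ) < (k:ℝ) := by exact_mod_cast hk
  have hkdR : (k:ℝ) ≤ (d:ℝ) := by exact_mod_cast hkd
  have htR : (1:ℝ) ≤ (t:ℝ) := by exact_mod_cast ht
  have hD : (0:ℝ) < (d:ℝ) - k + t := by linarith
  have hβpos : 0 < β := by rw [hβ]; positivity
  -- each min equals α
  have hmin : ∀ i ∈ Finset.range g,
      min α (((d : ℝ) - ((∑ j ∈ Finset.range i, u j : ℕ) : ℝ)) * β
          + ((t : ℝ) - (u i : ℝ)) * β') = α := by
    intro i hi
    rw [Finset.mem_range] at hi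
    have hSu : (∑ j ∈ Finset.range i, u j) + u i ≤ k := by
      rw [← hsum, ← Finset.sum_range_succ]
      exact Finset.sum_le_sum_of_subset (Finset.range_subset_range.2 hi)
    have hSuR : ((∑ j ∈ Finset.range i, u j : ℕ) : ℝ) + (u i : ℝ) ≤ (k:ℝ) := by
      exact_mod_cast hSu
    have key : ((d:ℝ) - k + t) * β ≤
        ((d : ℝ) - ((∑ j ∈ Finset.range i, u j : ℕ) : ℝ)) * β
          + ((t : ℝ) - (u i : ℝ)) * β' := by
      rw [hβ', ← hβ, ← add_mul]
      apply mul_le_mul_of_nonneg_right _ hβpos.le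
      linarith
    have hαeq : ((d:ℝ) - k + t) * β = α := by
      rw [hβ, hα]; field_simp
    rw [min_eq_left (by linarith)]
  rw [Finset.sum_congr rfl (fun i hi => by rw [hmin i hi])]
  rw [← Finset.sum_mul]
  have : (∑ i ∈ Finset.range g, (u i : ℝ)) = (k : ℝ) := by
    exact_mod_cast congrArg (Nat.cast : ℕ → ℝ) hsum
  rw [this, hα]
  rw [mul_div_cancel₀ M hkR.ne']
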